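/- Ordering of the error-amplification prefactors in Hamiltonian rescaling: for all real numbers c₁ > c₂ > 1, defining F(c₁,c₂) = √((c₁ - c₂)² + (c₁ - 1)² + (c₂ - 1)²) / ((1/c₂ - 1/c₁)(c₁ - 1)(c₂ - 1)), one has F(c₁,c₂) > √2 · c₂/(c₂ - 1) > √2 · c₁/(c₁ - 1) > √2. -/

import Mathlib

/-- Ordering of the error-amplification prefactors in Hamiltonian rescaling: for
`c₁ > c₂ > 1`, `F(c₁,c₂) > √2 c₂/(c₂-1) > √2 c₁/(c₁-1) > √2`, where
`F(c₁,c₂) = √((c₁-c₂)² + (c₁-1)² + (c₂-1)²) / ((1/c₂ - 1/c₁)(c₁-1)(c₂-1))`. -/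
theorem rescaling_prefactor_ordering (c₁ c₂ : ℝ) (h₂ : 1 < c₂) (h₁₂ : c₂ < c₁) :
    Real.sqrt ((c₁ - c₂) ^ 2 + (c₁ - 1) ^ 2 + (c₂ - 1) ^ 2) /
        ((1 / c₂ - 1 / c₁) * (c₁ - 1) * (c₂ - 1))
      > Real.sqrt 2 * c₂ / (c₂ - 1) ∧
    Real.sqrt 2 * c₂ / (c₂ - 1) > Real.sqrt 2 * c₁ / (c₁ - 1) ∧
    Real.sqrt 2 * c₁ / (c₁ - 1) > Real.sqrt 2 := by
  have h₁ : 1 < c₁ := h₂.trans h₁₂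
  have hc2 : (0:ℝ) < c₂ := lt_trans one_pos h₂
  have hc1 : (0:ℝ) < c₁ := lt_trans one_pos h₁
  have hs2 : (0:ℝ) < Real.sqrt 2 := Real.sqrt_pos.mpr two_pos
  have hs2sq : Real.sqrt 2 ^ 2 = 2 := Real.sq_sqrt (by norm_num)
  have hD : 0 < (1 / c₂ - 1 / c₁) * (c₁ - 1) * (c₂ - 1) := by
    have h1 : 0 < 1 / c₂ - 1 / c₁ := by
      have := one_div_lt_one_div_of_lt hc2 h₁₂
      linarith
    exact mul_pos (mul_pos h1 (sub_pos.mpr h₁)) (sub_pos.mpr h₂)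
  refine ⟨?_, ?_, ?_⟩
  · rw [gt_iff_lt, lt_div_iff₀ hD]
    have hS : (0:ℝ) ≤ (c₁ - c₂) ^ 2 + (c₁ - 1) ^ 2 + (c₂ - 1) ^ 2 := by positivity
    rw [show (Real.sqrt 2 * c₂ / (c₂ - 1) * ((1 / c₂ - 1 / c₁) * (c₁ - 1) * (c₂ - 1)))
        = Real.sqrt 2 * ((c₁ - c₂) * (c₁ - 1) / c₁) by
      field_simp [hc1.ne', hc2.ne', sub_ne_zero.mpr (ne_of_gt h₂), sub_ne_zero.mpr (ne_of_gt h₁)]]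
    rw [Real.lt_sqrt (mul_nonneg hs2.le (div_nonneg
      (mul_nonneg (by linarith) (by linarith)) hc1.le))]
    rw [mul_pow, hs2sq, div_pow, mul_div_assoc', div_lt_iff₀ (by positivity)]
    have ha : 0 < c₁ - c₂ := by linarith
    have hb : 0 < c₁ - 1 := by linarith
    have hab : (c₁ - c₂) * (c₁ - 1) < c₁ ^ 2 := by nlinarith
    nlinarith [mul_nonneg (mul_nonneg (sq_nonneg ((c₁ - c₂) - (c₁ - 1))) ha.le) hb.le,
      mul_pos (by positivity : (0:ℝ) < (c₁ - c₂) ^ 2 + (c₁ - 1) ^ 2) (by linarith : 0 < c₁ ^ 2 - (c₁ - c₂) * (c₁ - 1)),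
      mul_nonneg (sq_nonneg (c₂ - 1)) (sq_nonneg c₁)]
  · rw [gt_iff_lt, div_lt_div_iff₀ (by linarith) (by linarith)]
    have : c₁ * (c₂ - 1) < c₂ * (c₁ - 1) := by nlinarith
    nlinarith
  · rw [gt_iff_lt, lt_div_iff₀ (by linarith)]
    nlinarith
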